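/- The fiber product of two smooth toric monoids over a third toric monoid need not be smooth: for φ₁ = φ₂ : ℤ≥0² → ℤ≥0 given by (m,n) ↦ m+n, the fiber product ℤ≥0² ×_{ℤ≥0} ℤ≥0² is a toric monoid that is not freely generated (it requires four generators but has rank 3). -/

import Mathlib

namespace Toric

variable {G : Type*} [AddCommGroup G]

/-- A toric monoid inside the (torsion-free, in applications) ambient group
`G`: finitely generated, sharp and saturated (cancellativity — integrality —
and torsion-freeness are automatic for submonoids of a torsion-free group). -/
structure IsToric (σ : AddSubmonoid G) : Prop where
  fg : σ.FG
  sharp : ∀ v ∈ σ, -v ∈ σ → v = 0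
  saturated : ∀ v ∈ AddSubgroup.closure (σ : Set G), ∀ k : ℕ, 0 < k → k • v ∈ σ → v ∈ σ

/-- `τ` is a face of `σ`. -/
def IsFace (τ σ : AddSubmonoid G) : Prop :=
  τ ≤ σ ∧ ∀ v w : G, v ∈ σ → w ∈ σ → v + w ∈ τ → v ∈ τ ∧ w ∈ τ

/-- A smooth toric monoid: freely generated by linearly independent elements. -/
def IsSmooth (σ : AddSubmonoid G) : Prop :=
  ∃ (k : ℕ) (b : Fin k → G), LinearIndependent ℤ b ∧
    σ = AddSubmonoid.closure (Set.range b)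

variable {G₁ G₂ H : Type*} [AddCommGroup G₁] [AddCommGroup G₂] [AddCommGroup H]

/-- The fiber product `σ₁ ×_σ σ₂ = {(v,w) : φ₁ v = φ₂ w}` of two monoid
homomorphisms, as a submonoid of `G₁ × G₂`. -/
def fiberProd (σ₁ : AddSubmonoid G₁) (σ₂ : AddSubmonoid G₂) (σ : AddSubmonoid H)
    (φ₁ : σ₁ →+ σ) (φ₂ : σ₂ →+ σ) : AddSubmonoid (G₁ × G₂) where
  carrier := {p | ∃ (h₁ : p.1 ∈ σ₁) (h₂ : p.2 ∈ σ₂), φ₁ ⟨p.1, h₁⟩ = φ₂ ⟨p.2, h₂⟩}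
  zero_mem' := by
    refine ⟨σ₁.zero_mem, σ₂.zero_mem, ?_⟩
    have e₁ : (⟨(0 : G₁ × G₂).1, σ₁.zero_mem⟩ : σ₁) = 0 := rfl
    have e₂ : (⟨(0 : G₁ × G₂).2, σ₂.zero_mem⟩ : σ₂) = 0 := rfl
    rw [e₁, e₂, map_zero, map_zero]
  add_mem' := by
    rintro p q ⟨h₁, h₂, hp⟩ ⟨g₁, g₂, hq⟩
    refine ⟨σ₁.add_mem h₁ g₁, σ₂.add_mem h₂ g₂, ?_⟩
    have e₁ : (⟨(p + q).1, σ₁.add_mem h₁ g₁⟩ : σ₁) = ⟨p.1, h₁⟩ + ⟨q.1, g₁⟩ := rfl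
    have e₂ : (⟨(p + q).2, σ₂.add_mem h₂ g₂⟩ : σ₂) = ⟨p.2, h₂⟩ + ⟨q.2, g₂⟩ := rfl
    rw [e₁, e₂, map_add, map_add, hp, hq]

end Toric

namespace Toric

/-- The smooth monoid `ℤ≥0²` inside `ℤ²`. -/
def Zp2 : AddSubmonoid (Fin 2 → ℤ) where
  carrier := {v | ∀ i, 0 ≤ v i}
  zero_mem' := by intro i; simp
  add_mem' := by intro a b ha hb i; simpa using add_nonneg (ha i) (hb i)

/-- The smooth monoid `ℤ≥0` inside `ℤ`. -/
def Zp1 : AddSubmonoid ℤ where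
  carrier := {m | 0 ≤ m}
  zero_mem' := by show (0:ℤ) ≤ 0; exact le_refl 0
  add_mem' := by intro a b ha hb; exact add_nonneg (show (0:ℤ) ≤ a from ha) (show (0:ℤ) ≤ b from hb)

/-- The homomorphism `ℤ≥0² → ℤ≥0`, `(m,n) ↦ m + n`. -/
def phiSum : Zp2 →+ Zp1 where
  toFun v := ⟨v.1 0 + v.1 1, add_nonneg (v.2 0) (v.2 1)⟩
  map_zero' := by
    apply Subtype.ext
    show ((0 : Zp2) : Fin 2 → ℤ) 0 + ((0 : Zp2) : Fin 2 → ℤ) 1 = 0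
    simp
  map_add' := by
    intro a b
    apply Subtype.ext
    show ((a + b : Zp2) : Fin 2 → ℤ) 0 + ((a + b : Zp2) : Fin 2 → ℤ) 1 = _
    simp
    ring

/-! ### Auxiliary material for `fiberProd_not_smooth` -/

/-- The ambient group of the fiber product. -/
private abbrev GG := (Fin 2 → ℤ) × (Fin 2 → ℤ)

/-- The generators (atoms) of the fiber product. -/
private def atom (i j : Fin 2) : GG := (Pi.single i 1, Pi.single j 1)

private lemma atom_fst (i j t : Fin 2) : (atom i j).1 t = if t = i then 1 else 0 := by
  simp [atom, Pi.single_apply]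

private lemma atom_snd (i j t : Fin 2) : (atom i j).2 t = if t = j then 1 else 0 := by
  simp [atom, Pi.single_apply]

private lemma atom_fst_sum (i j : Fin 2) : (atom i j).1 0 + (atom i j).1 1 = 1 := by
  rw [atom_fst, atom_fst]; fin_cases i <;> simp

private lemma atom_snd_sum (i j : Fin 2) : (atom i j).2 0 + (atom i j).2 1 = 1 := by
  rw [atom_snd, atom_snd]; fin_cases j <;> simp

private lemma mem_fp {p : GG} :
    p ∈ fiberProd Zp2 Zp2 Zp1 phiSum phiSum ↔
      (∀ i, 0 ≤ p.1 i) ∧ (∀ i, 0 ≤ p.2 i) ∧ p.1 0 + p.1 1 = p.2 0 + p.2 1 := by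
  constructor
  · rintro ⟨h₁, h₂, he⟩
    exact ⟨h₁, h₂, congrArg Subtype.val he⟩
  · rintro ⟨h₁, h₂, he⟩
    exact ⟨h₁, h₂, Subtype.ext he⟩

private lemma atom_mem (i j : Fin 2) : atom i j ∈ fiberProd Zp2 Zp2 Zp1 phiSum phiSum := by
  refine mem_fp.2 ⟨fun t => ?_, fun t => ?_, ?_⟩
  · rw [atom_fst]; split <;> norm_num
  · rw [atom_snd]; split <;> norm_num
  · rw [atom_fst_sum, atom_snd_sum]

private lemma atom_rel : atom 0 0 + atom 1 1 = atom 0 1 + atom 1 0 := by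
  refine Prod.ext ?_ ?_ <;> funext t <;> fin_cases t <;> simp [atom]

private lemma atom_inj {i j i' j' : Fin 2} (h : atom i j = atom i' j') : i = i' ∧ j = j' := by
  constructor
  · by_contra hne
    have h1 := congrFun (congrArg Prod.fst h) i
    rw [atom_fst, atom_fst, if_pos rfl, if_neg hne] at h1
    exact one_ne_zero h1
  · by_contra hne
    have h1 := congrFun (congrArg Prod.snd h) j
    rw [atom_snd, atom_snd, if_pos rfl, if_neg hne] at h1
    exact one_ne_zero h1

/-- The size (total coordinate sum) of an element. -/
private def sz (p : GG) : ℤ := p.1 0 + p.1 1 + p.2 0 + p.2 1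

private lemma sz_add (p q : GG) : sz (p + q) = sz p + sz q := by
  simp [sz]; ring

private lemma sz_atom (i j : Fin 2) : sz (atom i j) = 2 := by
  have h1 := atom_fst_sum i j
  have h2 := atom_snd_sum i j
  simp only [sz]
  omega

private lemma sz_nonneg {p : GG} (hp : p ∈ fiberProd Zp2 Zp2 Zp1 phiSum phiSum) : 0 ≤ sz p := by
  obtain ⟨h1, h2, _⟩ := mem_fp.1 hp
  have := h1 0; have := h1 1; have := h2 0; have := h2 1
  simp only [sz]; omega

private lemma two_le_sz {p : GG} (hp : p ∈ fiberProd Zp2 Zp2 Zp1 phiSum phiSum)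
    (hne : p ≠ 0) : 2 ≤ sz p := by
  obtain ⟨h1, h2, he⟩ := mem_fp.1 hp
  by_contra hlt
  apply hne
  have h10 := h1 0; have h11 := h1 1; have h20 := h2 0; have h21 := h2 1
  simp only [sz] at hlt
  have e10 : p.1 0 = 0 := by omega
  have e11 : p.1 1 = 0 := by omega
  have e20 : p.2 0 = 0 := by omega
  have e21 : p.2 1 = 0 := by omega
  refine Prod.ext (funext fun i => ?_) (funext fun i => ?_) <;> fin_cases i
  · exact e10
  · exact e11
  · exact e20
  · exact e21

/-- The set of the four atoms. -/
private def atomSet : Set GG := Set.range fun ij : Fin 2 × Fin 2 => atom ij.1 ij.2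

private lemma fp_eq_closure :
    fiberProd Zp2 Zp2 Zp1 phiSum phiSum = AddSubmonoid.closure atomSet := by
  apply le_antisymm
  · suffices H : ∀ n : ℕ, ∀ p : GG, p ∈ fiberProd Zp2 Zp2 Zp1 phiSum phiSum →
        p.1 0 + p.1 1 = (n : ℤ) → p ∈ AddSubmonoid.closure atomSet by
      intro p hp
      obtain ⟨h1, _, _⟩ := mem_fp.1 hp
      exact H (p.1 0 + p.1 1).toNat p hp
        (Int.toNat_of_nonneg (add_nonneg (h1 0) (h1 1))).symm
    intro n
    induction n with
    | zero =>
      intro p hp hn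
      obtain ⟨h1, h2, he⟩ := mem_fp.1 hp
      have h10 := h1 0; have h11 := h1 1; have h20 := h2 0; have h21 := h2 1
      push_cast at hn
      have hp0 : p = 0 := by
        have e10 : p.1 0 = 0 := by omega
        have e11 : p.1 1 = 0 := by omega
        have e20 : p.2 0 = 0 := by omega
        have e21 : p.2 1 = 0 := by omega
        refine Prod.ext (funext fun i => ?_) (funext fun i => ?_) <;> fin_cases i
        · exact e10
        · exact e11
        · exact e20
        · exact e21
      rw [hp0]; exact zero_mem _
    | succ n ih =>
      intro p hp hn
      obtain ⟨h1, h2, he⟩ := mem_fp.1 hp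
      obtain ⟨i, hi⟩ : ∃ i, 1 ≤ p.1 i := by
        by_contra hc; push_neg at hc
        have := hc 0; have := hc 1; have := h1 0; have := h1 1
        omega
      obtain ⟨j, hj⟩ : ∃ j, 1 ≤ p.2 j := by
        by_contra hc; push_neg at hc
        have := hc 0; have := hc 1; have := h2 0; have := h2 1
        omega
      have hfst : ∀ t, (p - atom i j).1 t = p.1 t - (atom i j).1 t := fun _ => rfl
      have hsnd : ∀ t, (p - atom i j).2 t = p.2 t - (atom i j).2 t := fun _ => rfl
      have hq : p - atom i j ∈ fiberProd Zp2 Zp2 Zp1 phiSum phiSum := by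
        refine mem_fp.2 ⟨fun t => ?_, fun t => ?_, ?_⟩
        · rw [hfst, atom_fst]
          split
          · next h => subst h; omega
          · have := h1 t; omega
        · rw [hsnd, atom_snd]
          split
          · next h => subst h; omega
          · have := h2 t; omega
        · rw [hfst, hfst, hsnd, hsnd]
          have := atom_fst_sum i j
          have := atom_snd_sum i j
          omega
      have hqs : (p - atom i j).1 0 + (p - atom i j).1 1 = (n : ℤ) := by
        rw [hfst, hfst]
        have := atom_fst_sum i j
        push_cast at hn ⊢
        omega
      have hpe : p = (p - atom i j) + atom i j := by abel
      rw [hpe]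
      exact add_mem (ih _ hq hqs) (AddSubmonoid.subset_closure ⟨(i, j), rfl⟩)
  · rw [AddSubmonoid.closure_le]
    rintro _ ⟨⟨i, j⟩, rfl⟩
    exact atom_mem i j


/-- The fiber product of the two smooth monoids `ℤ≥0²` over
`ℤ≥0` along `(m,n) ↦ m + n` is a toric monoid which is not smooth (not
freely generated). -/
theorem fiberProd_not_smooth :
    IsToric (fiberProd Zp2 Zp2 Zp1 phiSum phiSum) ∧
    ¬ IsSmooth (fiberProd Zp2 Zp2 Zp1 phiSum phiSum) := by
  constructor
  · refine ⟨?_, ?_, ?_⟩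
    · -- finitely generated
      rw [AddSubmonoid.fg_iff]
      exact ⟨atomSet, fp_eq_closure.symm, Set.finite_range _⟩
    · -- sharp
      intro v hv hnv
      obtain ⟨h1, h2, _⟩ := mem_fp.1 hv
      obtain ⟨g1, g2, _⟩ := mem_fp.1 hnv
      refine Prod.ext (funext fun i => ?_) (funext fun i => ?_)
      · have := h1 i
        have hg := g1 i
        have : (-v).1 i = -(v.1 i) := rfl
        show v.1 i = 0
        rw [this] at hg
        omega
      · have := h2 i
        have hg := g2 i
        have : (-v).2 i = -(v.2 i) := rfl
        show v.2 i = 0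
        rw [this] at hg
        omega
    · -- saturated
      intro v _ k hk hkv
      obtain ⟨h1, h2, he⟩ := mem_fp.1 hkv
      have hksm : ∀ i, (k • v).1 i = (k : ℤ) * v.1 i := by
        intro i; simp [Prod.smul_fst]
      have hksm2 : ∀ i, (k • v).2 i = (k : ℤ) * v.2 i := by
        intro i; simp [Prod.smul_snd]
      have hkpos : (0 : ℤ) < (k : ℤ) := by exact_mod_cast hk
      refine mem_fp.2 ⟨fun i => ?_, fun i => ?_, ?_⟩
      · have := h1 i; rw [hksm i] at this
        exact (mul_nonneg_iff_of_pos_left hkpos).1 this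
      · have := h2 i; rw [hksm2 i] at this
        exact (mul_nonneg_iff_of_pos_left hkpos).1 this
      · rw [hksm 0, hksm 1, hksm2 0, hksm2 1] at he
        have : (k : ℤ) * (v.1 0 + v.1 1) = (k : ℤ) * (v.2 0 + v.2 1) := by ring_nf; linarith [he]
        exact mul_left_cancel₀ (ne_of_gt hkpos) this
  · -- not smooth
    rintro ⟨k, b, hb, hbF⟩
    -- every element of size 2 in the closure is in the range of `b`
    have hrangeF : ∀ i, b i ∈ fiberProd Zp2 Zp2 Zp1 phiSum phiSum := by
      intro i
      rw [hbF]
      exact AddSubmonoid.subset_closure ⟨i, rfl⟩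
    have key : ∀ p ∈ AddSubmonoid.closure (Set.range b),
        p ∈ fiberProd Zp2 Zp2 Zp1 phiSum phiSum ∧ (sz p = 2 → p ∈ Set.range b) := by
      intro p hp
      induction hp using AddSubmonoid.closure_induction with
      | mem x hx =>
        obtain ⟨i, rfl⟩ := hx
        exact ⟨hrangeF i, fun _ => ⟨i, rfl⟩⟩
      | zero => exact ⟨zero_mem _, fun h => by simp [sz] at h⟩
      | add q r hq hr ihq ihr =>
        refine ⟨add_mem ihq.1 ihr.1, fun h2 => ?_⟩
        rw [sz_add] at h2
        have hqnn := sz_nonneg ihq.1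
        have hrnn := sz_nonneg ihr.1
        have sz_zero : sz (0 : GG) = 0 := by simp [sz]
        by_cases hq0 : q = 0
        · rw [hq0, zero_add]
          refine ihr.2 ?_
          rw [hq0, sz_zero, zero_add] at h2
          exact h2
        · by_cases hr0 : r = 0
          · rw [hr0, add_zero]
            refine ihq.2 ?_
            rw [hr0, sz_zero, add_zero] at h2
            exact h2
          · have := two_le_sz ihq.1 hq0
            have := two_le_sz ihr.1 hr0
            omega
    have hatom : ∀ i j : Fin 2, atom i j ∈ Set.range b := by
      intro i j
      have hm : atom i j ∈ AddSubmonoid.closure (Set.range b) := by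
        rw [← hbF]; exact atom_mem i j
      exact (key _ hm).2 (sz_atom i j)
    obtain ⟨ix, hix⟩ := hatom 0 0
    obtain ⟨iy, hiy⟩ := hatom 0 1
    obtain ⟨iz, hiz⟩ := hatom 1 0
    obtain ⟨iw, hiw⟩ := hatom 1 1
    -- the four indices are pairwise distinct
    have hne : ∀ {i j i' j' : Fin 2} {u v : Fin k}, b u = atom i j → b v = atom i' j' →
        ¬ (i = i' ∧ j = j') → u ≠ v := by
      rintro i j i' j' u v hu hv hab rfl
      rw [hu] at hv
      exact hab (atom_inj hv)
    have nxy : ix ≠ iy := hne hix hiy (by decide)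
    have nxz : ix ≠ iz := hne hix hiz (by decide)
    have nxw : ix ≠ iw := hne hix hiw (by decide)
    have nyz : iy ≠ iz := hne hiy hiz (by decide)
    have nyw : iy ≠ iw := hne hiy hiw (by decide)
    have nzw : iz ≠ iw := hne hiz hiw (by decide)
    have hfinj : Function.Injective ![ix, iy, iz, iw] := by
      intro a b' hab
      fin_cases a <;> fin_cases b' <;> simp at hab ⊢ <;> simp only [hab] at * <;> simp_all only [ne_eq, not_true_eq_false]
    have hcomp := hb.comp ![ix, iy, iz, iw] hfinj
    rw [Fintype.linearIndependent_iff] at hcomp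
    have hsum : ∑ t : Fin 4, (![1, -1, -1, 1] : Fin 4 → ℤ) t • (b ∘ ![ix, iy, iz, iw]) t = 0 := by
      simp [Fin.sum_univ_four, hix, hiy, hiz, hiw]
      have := atom_rel
      rw [show atom 0 0 = atom 0 1 + atom 1 0 - atom 1 1 by rw [← atom_rel]; abel]
      abel
    have := hcomp ![1, -1, -1, 1] hsum 0
    simp at this


end Toric
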